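/- Let u̇ = f(u) on [0,T], let U be differentiable with residual R = U̇ − f(U), and let z solve the dual problem −ż(t) = Ā(t)ᵀ z(t) on [0,T) with z(T) = z_T, where Ā(t) = ∫₀¹ Df(sU(t)+(1−s)u(t)) ds. Then ⟨z_T, U(T) − u(T)⟩ = ⟨z(0), U(0) − u(0)⟩ + ∫₀ᵀ ⟨z(t), R(t)⟩ dt. -/

import Mathlib

open intervalIntegral

local notation "⟪" x ", " y "⟫" => inner (𝕜 := ℝ) x y

lemma segment_integral_apply {n : ℕ} (f : EuclideanSpace ℝ (Fin n) → EuclideanSpace ℝ (Fin n))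
    (hf : ContDiff ℝ 1 f) (a b : EuclideanSpace ℝ (Fin n)) :
    (∫ s in (0 : ℝ)..1, fderiv ℝ f (s • b + (1 - s) • a)) (b - a) = f b - f a := by
  set γ : ℝ → EuclideanSpace ℝ (Fin n) := fun s => s • b + (1 - s) • a with hγ
  have hγd : ∀ s : ℝ, HasDerivAt γ (b - a) s := by
    intro s
    have h1 : HasDerivAt (fun s : ℝ => s • b) b s := by
      simpa using (hasDerivAt_id s).smul_const b
    have h2 : HasDerivAt (fun s : ℝ => (1 - s) • a) (-a) s := by
      have : HasDerivAt (fun s : ℝ => (1 - s)) (-1) s := by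
        simpa using (hasDerivAt_id s).const_sub (1:ℝ)
      simpa using this.smul_const a
    exact (h1.add h2).congr_deriv (sub_eq_add_neg b a).symm
  have hcont : Continuous fun s : ℝ => fderiv ℝ f (γ s) :=
    (hf.continuous_fderiv one_ne_zero).comp (by continuity)
  have hint : IntervalIntegrable (fun s : ℝ => fderiv ℝ f (γ s)) MeasureTheory.volume 0 1 :=
    hcont.intervalIntegrable 0 1
  rw [ContinuousLinearMap.intervalIntegral_apply hint]
  have hderiv : ∀ s ∈ Set.uIcc (0:ℝ) 1,
      HasDerivAt (fun s => f (γ s)) (fderiv ℝ f (γ s) (b - a)) s := fun s _ =>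
    ((hf.differentiable one_ne_zero).differentiableAt.hasFDerivAt).comp_hasDerivAt s (hγd s)
  have := integral_eq_sub_of_hasDerivAt hderiv
    (((hcont.clm_apply continuous_const).intervalIntegrable 0 1))
  simpa [hγ] using this

/-- Error representation formula: if u̇ = f(u), U has residual R = U̇ − f(U),
and z solves the dual problem −ż = Ā(t)ᵀz with z(T) = z_T, where
Ā(t) = ∫₀¹ Df(sU(t)+(1−s)u(t)) ds, then
⟨z_T, U(T) − u(T)⟩ = ⟨z(0), U(0) − u(0)⟩ + ∫₀ᵀ ⟨z, R⟩ dt. -/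
theorem error_representation (n : ℕ) (T : ℝ) (hT : 0 ≤ T)
    (f : EuclideanSpace ℝ (Fin n) → EuclideanSpace ℝ (Fin n))
    (hf : ContDiff ℝ 1 f)
    (u U R z : ℝ → EuclideanSpace ℝ (Fin n))
    (zT : EuclideanSpace ℝ (Fin n))
    (hu : ∀ t ∈ Set.Icc 0 T, HasDerivAt u (f (u t)) t)
    (hU : ∀ t ∈ Set.Icc 0 T, HasDerivAt U (f (U t) + R t) t)
    (hzT : z T = zT)
    (hz : ∀ t ∈ Set.Icc 0 T,
      HasDerivAt z
        (-(ContinuousLinearMap.adjoint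
            (∫ s in (0 : ℝ)..1, fderiv ℝ f (s • U t + (1 - s) • u t)) (z t))) t)
    (hRc : ContinuousOn R (Set.Icc 0 T)) (hzc : ContinuousOn z (Set.Icc 0 T)) :
    ⟪zT, U T - u T⟫ = ⟪z 0, U 0 - u 0⟫ + ∫ t in (0 : ℝ)..T, ⟪z t, R t⟫ := by
  have huIcc : Set.uIcc (0:ℝ) T = Set.Icc 0 T := Set.uIcc_of_le hT
  have hderiv : ∀ t ∈ Set.uIcc (0:ℝ) T,
      HasDerivAt (fun t => ⟪z t, U t - u t⟫) (⟪z t, R t⟫) t := by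
    intro t ht
    rw [huIcc] at ht
    have h := (hz t ht).inner ℝ ((hU t ht).sub (hu t ht))
    have hA := segment_integral_apply f hf (u t) (U t)
    have hadj : ⟪-(ContinuousLinearMap.adjoint
        (∫ s in (0 : ℝ)..1, fderiv ℝ f (s • U t + (1 - s) • u t)) (z t)), U t - u t⟫
        = -⟪z t, f (U t) - f (u t)⟫ := by
      rw [inner_neg_left, ContinuousLinearMap.adjoint_inner_left, hA]
    have : ⟪z t, f (U t) + R t - f (u t)⟫ +
        ⟪-(ContinuousLinearMap.adjoint
          (∫ s in (0 : ℝ)..1, fderiv ℝ f (s • U t + (1 - s) • u t)) (z t)), U t - u t⟫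
        = ⟪z t, R t⟫ := by
      rw [hadj]
      have : f (U t) + R t - f (u t) = (f (U t) - f (u t)) + R t := by abel
      rw [this, inner_add_right]; ring
    rw [← this]
    exact h
  have hint : IntervalIntegrable (fun t => ⟪z t, R t⟫) MeasureTheory.volume 0 T :=
    (ContinuousOn.intervalIntegrable (by rw [huIcc]; exact hzc.inner hRc))
  have := integral_eq_sub_of_hasDerivAt hderiv hint
  rw [this, hzT]
  ring
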